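/- Let α > 0 and β be real numbers. Then for every real number x, the series ∑_{k=0}^∞ x^k / Γ(kα + β) defining the two-parameter Mittag-Leffler function E_{α,β}(x) is summable (converges absolutely). -/

import Mathlib

open Filter Real Asymptotics

lemma gamma_ratio_lower (α : ℝ) (hα : 0 < α) {t : ℝ} (ht : 2 ≤ t) :
    Real.Gamma t * (t - 1) ^ α ≤ Real.Gamma (t + α) := by
  have ht1 : (1 : ℝ) ≤ t - 1 := by linarith
  have ht0 : 0 < t := by linarith
  have htm0 : 0 < t - 1 := by linarith
  have hΓt : 0 < Real.Gamma t := Real.Gamma_pos_of_pos ht0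
  have hΓtm : 0 < Real.Gamma (t - 1) := Real.Gamma_pos_of_pos htm0
  have hΓta : 0 < Real.Gamma (t + α) := Real.Gamma_pos_of_pos (by linarith)
  -- convexity: t = λ (t+α) + (1-λ) (t-1), λ = 1/(1+α)
  set l : ℝ := 1 / (1 + α) with hl
  have hl0 : 0 < l := by positivity
  have hl1 : l < 1 := by
    rw [hl, div_lt_one (by linarith)]; linarith
  have hconv := convexOn_log_Gamma.2
      (by simp only [Set.mem_Ioi]; linarith : t + α ∈ Set.Ioi (0:ℝ))
      (Set.mem_Ioi.mpr htm0)
      (le_of_lt hl0) (show (0:ℝ) ≤ 1 - l from by linarith)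
      (by ring : l + (1 - l) = 1)
  have hcomb : l * (t + α) + (1 - l) * (t - 1) = t := by
    have h1 : l * (1 + α) = 1 := by
      rw [hl]; field_simp [show (1:ℝ) + α ≠ 0 by linarith]
    linear_combination h1
  simp only [smul_eq_mul, Function.comp_apply] at hconv
  rw [hcomb] at hconv
  -- Gamma t = (t-1) * Gamma (t-1)
  have hrec : Real.Gamma t = (t - 1) * Real.Gamma (t - 1) := by
    have := Real.Gamma_add_one (s := t - 1) (ne_of_gt htm0)
    simpa using this
  have hlogt : Real.log (Real.Gamma (t - 1)) =
      Real.log (Real.Gamma t) - Real.log (t - 1) := by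
    rw [hrec, Real.log_mul (ne_of_gt htm0) (ne_of_gt hΓtm)]; ring
  rw [hlogt] at hconv
  -- hconv : log Γ t ≤ l * log Γ(t+α) + (1-l)*(log Γ t - log (t-1))
  have key : Real.log (Real.Gamma t) + α * Real.log (t - 1)
      ≤ Real.log (Real.Gamma (t + α)) := by
    have hconv' := mul_le_mul_of_nonneg_left hconv
      (le_of_lt (show (0:ℝ) < 1 + α by linarith))
    have e1 : (1 + α) * (l * Real.log (Real.Gamma (t + α)) +
        (1 - l) * (Real.log (Real.Gamma t) - Real.log (t - 1))) =
        Real.log (Real.Gamma (t + α)) +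
          α * (Real.log (Real.Gamma t) - Real.log (t - 1)) := by
      have h1 : l * (1 + α) = 1 := by
        rw [hl]; field_simp [show (1:ℝ) + α ≠ 0 by linarith]
      linear_combination (Real.log (Real.Gamma (t + α)) - (Real.log (Real.Gamma t) - Real.log (t - 1))) * h1
    rw [e1] at hconv'
    linarith
  have hexp := Real.exp_le_exp.mpr key
  rw [Real.exp_add, Real.exp_log hΓt, Real.exp_log hΓta, mul_comm α,
    ← Real.rpow_def_of_pos htm0] at hexp
  exact hexp

/-- Two-parameter Mittag-Leffler function `E_{α,β}(x) = ∑ₖ xᵏ / Γ(kα + β)`,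
with the convention `1/Γ = 0` at the poles of `Γ` (in Mathlib, `Real.Gamma`
vanishes at nonpositive integers, so division by it gives `0` there). -/
noncomputable def mittagLeffler (a b x : ℝ) : ℝ := ∑' k : ℕ, x ^ k / Real.Gamma (k * a + b)

theorem mittagLeffler_summable
    (α β : ℝ) (hα : 0 < α) (x : ℝ) :
    Summable fun k : ℕ => x ^ k / Real.Gamma (k * α + β) := by
  apply summable_of_ratio_norm_eventually_le (r := 1/2) (by norm_num)
  have htend : Tendsto (fun k : ℕ => (k : ℝ) * α + β) atTop atTop :=
    (tendsto_natCast_atTop_atTop.atTop_mul_const hα).atTop_add tendsto_const_nhds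
  set M : ℝ := (2 * |x| + 1) ^ (1 / α) with hM
  filter_upwards [htend.eventually_ge_atTop (max 2 (M + 1))] with k hk
  set t : ℝ := (k : ℝ) * α + β with hts
  have ht2 : 2 ≤ t := le_trans (le_max_left _ _) hk
  have htM : M + 1 ≤ t := le_trans (le_max_right _ _) hk
  have htm0 : 0 < t - 1 := by linarith
  have hΓt : 0 < Real.Gamma t := Real.Gamma_pos_of_pos (by linarith)
  have hΓta : 0 < Real.Gamma (t + α) := Real.Gamma_pos_of_pos (by linarith)
  have hM0 : 0 ≤ M := Real.rpow_nonneg (by positivity) _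
  -- (t-1)^α ≥ 2|x| + 1
  have hpow : 2 * |x| + 1 ≤ (t - 1) ^ α := by
    have h1 : M ≤ t - 1 := by linarith
    have h2 : M ^ α ≤ (t - 1) ^ α := Real.rpow_le_rpow hM0 h1 (le_of_lt hα)
    have h3 : M ^ α = 2 * |x| + 1 := by
      rw [hM, ← Real.rpow_mul (by positivity),
        one_div, inv_mul_cancel₀ (ne_of_gt hα), Real.rpow_one]
    · linarith [h2, h3.symm.le]
  have hkey : 2 * |x| * Real.Gamma t ≤ Real.Gamma (t + α) := by
    have := gamma_ratio_lower α hα ht2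
    nlinarith [hΓt, hpow]
  -- conclude the ratio bound
  have harg : ((k : ℝ) + 1) * α + β = t + α := by rw [hts]; ring
  push_cast [harg]
  rw [Real.norm_eq_abs, Real.norm_eq_abs, abs_div, abs_div, abs_of_pos hΓt,
    abs_of_pos hΓta, abs_pow, abs_pow, pow_succ]
  rw [div_le_iff₀ hΓta]
  have : |x| ^ k * |x| * Real.Gamma t ≤ |x| ^ k * (Real.Gamma (t + α) / 2) := by
    have h4 : |x| * Real.Gamma t ≤ Real.Gamma (t + α) / 2 := by linarith
    have := mul_le_mul_of_nonneg_left h4 (pow_nonneg (abs_nonneg x) k)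
    linarith [this]
  calc |x| ^ k * |x| = |x| ^ k * |x| * Real.Gamma t / Real.Gamma t := by
        field_simp
    _ ≤ |x| ^ k * (Real.Gamma (t + α) / 2) / Real.Gamma t := by
        gcongr
    _ = 1 / 2 * (|x| ^ k / Real.Gamma t) * Real.Gamma (t + α) := by ring
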